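/- Every weakly l.f.g.u. weakly positive monoid is factorable: if 𝓗 = (H, ≼) is a weakly positive monoid such that the germ of 𝓗 at every ≼-non-unit is an f.g.u. premonoid, then every ≼-non-unit of H is a non-empty product of ≼-irreducibles. -/

import Mathlib

open Pointwise

namespace FactPaper

/-- `u` is a `≼`-unit for the preorder-like relation `r` on a monoid. -/
def RUnit {M : Type*} [Monoid M] (r : M → M → Prop) (u : M) : Prop :=
  r u 1 ∧ r 1 u

/-- `u` is a `≼`-non-unit. -/
def RNonUnit {M : Type*} [Monoid M] (r : M → M → Prop) (u : M) : Prop :=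
  ¬ RUnit r u

/-- The strict part `≺` of the relation `r`. -/
def RLt {M : Type*} (r : M → M → Prop) (x y : M) : Prop :=
  r x y ∧ ¬ r y x

/-- `a` is a `≼`-irreducible. -/
def RIrred {M : Type*} [Monoid M] (r : M → M → Prop) (a : M) : Prop :=
  RNonUnit r a ∧
    ∀ y z : M, RNonUnit r y → RNonUnit r z → RLt r y a → RLt r z a → a ≠ y * z

/-- `a` is a `≼`-atom. -/
def RAtom {M : Type*} [Monoid M] (r : M → M → Prop) (a : M) : Prop :=
  RNonUnit r a ∧ ∀ y z : M, RNonUnit r y → RNonUnit r z → a ≠ y * z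

/-- `a` is a `≼`-quark. -/
def RQuark {M : Type*} [Monoid M] (r : M → M → Prop) (a : M) : Prop :=
  RNonUnit r a ∧ ¬ ∃ b : M, RNonUnit r b ∧ RLt r b a

/-- The divisibility preorder: `Dvd2 x y` iff `y ∈ M x M`. -/
def Dvd2 {M : Type*} [Monoid M] (x y : M) : Prop :=
  ∃ u v : M, y = u * x * v

/-- The restriction of a relation on `M` to a submonoid `K`. -/
def SubRel {M : Type*} [Monoid M] (r : M → M → Prop) (K : Submonoid M) (a b : K) : Prop :=
  r (a : M) (b : M)

/-- The preorder `⊑` on words induced by `r`: an injection of indices matching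
`r`-equivalent letters. -/
def WordLe {M : Type*} (r : M → M → Prop) (l m : List M) : Prop :=
  ∃ σ : Fin l.length ↪ Fin m.length,
    ∀ i : Fin l.length, r (l.get i) (m.get (σ i)) ∧ r (m.get (σ i)) (l.get i)

/-- `⊑`-equivalence of words. -/
def WordEquiv {M : Type*} (r : M → M → Prop) (l m : List M) : Prop :=
  WordLe r l m ∧ WordLe r m l

/-- `l` is a `≼`-factorization of `x`: a word of `≼`-irreducibles with product `x`. -/
def IsFac {M : Type*} [Monoid M] (r : M → M → Prop) (x : M) (l : List M) : Prop :=
  (∀ a ∈ l, RIrred r a) ∧ l.prod = x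

/-- `l` is a minimal `≼`-factorization of `x`: a `⊑`-minimal `≼`-factorization. -/
def IsMinFac {M : Type*} [Monoid M] (r : M → M → Prop) (x : M) (l : List M) : Prop :=
  IsFac r x l ∧ ∀ m : List M, IsFac r x m → WordLe r m l → WordLe r l m

/-- `l` is an atomic `≼`-factorization of `x`. -/
def IsAtomicFac {M : Type*} [Monoid M] (r : M → M → Prop) (x : M) (l : List M) : Prop :=
  (∀ a ∈ l, RAtom r a) ∧ l.prod = x

/-- `l` is a minimal atomic `≼`-factorization of `x`. -/
def IsMinAtomicFac {M : Type*} [Monoid M] (r : M → M → Prop) (x : M) (l : List M) : Prop :=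
  IsMinFac r x l ∧ ∀ a ∈ l, RAtom r a

/-- Every `≼`-non-unit is a non-empty product of `≼`-irreducibles. -/
def Factorable {M : Type*} [Monoid M] (r : M → M → Prop) : Prop :=
  ∀ x : M, RNonUnit r x →
    ∃ l : List M, l ≠ [] ∧ (∀ a ∈ l, RIrred r a) ∧ l.prod = x

/-- Every `≼`-non-unit is a non-empty product of `≼`-atoms. -/
def Atomic {M : Type*} [Monoid M] (r : M → M → Prop) : Prop :=
  ∀ x : M, RNonUnit r x →
    ∃ l : List M, l ≠ [] ∧ (∀ a ∈ l, RAtom r a) ∧ l.prod = x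

/-- The premonoid `(M, r)` is finitely generated up to units. -/
def IsFGU {M : Type*} [Monoid M] (r : M → M → Prop) : Prop :=
  ∃ A : Set M, A.Finite ∧
    Submonoid.closure
      {w : M | ∃ u a v : M, RUnit r u ∧ a ∈ A ∧ RUnit r v ∧ w = u * a * v} = ⊤

/-- The submonoid generated by the `∣_M`-divisors of `x` (ground monoid of the germ of a
premonoid at `x`). -/
def GermSub {M : Type*} [Monoid M] (x : M) : Submonoid M :=
  Submonoid.closure {y : M | Dvd2 y x}

/-- Membership in the smallest divisor-closed submonoid containing `x`. -/
inductive InDC {M : Type*} [Monoid M] (x : M) : M → Prop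
  | base : InDC x x
  | one : InDC x 1
  | mul {a b : M} : InDC x a → InDC x b → InDC x (a * b)
  | dvd {a b : M} : InDC x b → Dvd2 a b → InDC x a

/-- The smallest divisor-closed submonoid of `M` containing `x`. -/
def DCSub {M : Type*} [Monoid M] (x : M) : Submonoid M where
  carrier := {y : M | InDC x y}
  mul_mem' := fun ha hb => InDC.mul ha hb
  one_mem' := InDC.one

/-- `(M, r)` is a weakly positive monoid. -/
def WeaklyPositive {M : Type*} [Monoid M] (r : M → M → Prop) : Prop :=
  (∀ x u v : M, RUnit r u → RUnit r v → r (u * x * v) x) ∧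
    (∀ x a b : M, r x (a * x * b))

/-- `(M, r)` is locally of finite type (loft). -/
def IsLoft {M : Type*} [Monoid M] (r : M → M → Prop) : Prop :=
  ∀ x : M, RNonUnit r x →
    ∃ A : Set M, A.Finite ∧ A ⊆ {a : M | RIrred r a} ∧
      ∀ l : List M, IsFac r x l →
        ∃ m : List M, (∀ a ∈ m, a ∈ A) ∧ WordEquiv r l m

/-- `(M, r)` is BF-factorable. -/
def IsBFFactorable {M : Type*} [Monoid M] (r : M → M → Prop) : Prop :=
  ∀ x : M, RNonUnit r x →
    {n : ℕ | ∃ l : List M, IsFac r x l ∧ l.length = n}.Finite ∧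
      {n : ℕ | ∃ l : List M, IsFac r x l ∧ l.length = n}.Nonempty

/-- `(M, r)` is BmF-factorable. -/
def IsBmFFactorable {M : Type*} [Monoid M] (r : M → M → Prop) : Prop :=
  ∀ x : M, RNonUnit r x →
    {n : ℕ | ∃ l : List M, IsMinFac r x l ∧ l.length = n}.Finite ∧
      {n : ℕ | ∃ l : List M, IsMinFac r x l ∧ l.length = n}.Nonempty

/-- `(M, r)` is FF-factorable: modulo `⊑`-equivalence, every `≼`-non-unit has finitely
many (and at least one) `≼`-factorizations. -/
def IsFFFactorable {M : Type*} [Monoid M] (r : M → M → Prop) : Prop :=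
  ∀ x : M, RNonUnit r x →
    (∃ l : List M, IsFac r x l) ∧
      ∃ F : Set (List M), F.Finite ∧
        ∀ l : List M, IsFac r x l → ∃ m ∈ F, IsFac r x m ∧ WordEquiv r l m

/-- `(M, r)` is FmF-factorable. -/
def IsFmFFactorable {M : Type*} [Monoid M] (r : M → M → Prop) : Prop :=
  ∀ x : M, RNonUnit r x →
    (∃ l : List M, IsMinFac r x l) ∧
      ∃ F : Set (List M), F.Finite ∧
        ∀ l : List M, IsMinFac r x l → ∃ m ∈ F, IsMinFac r x m ∧ WordEquiv r l m

/-- `(M, r)` is FF-atomic. -/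
def IsFFAtomic {M : Type*} [Monoid M] (r : M → M → Prop) : Prop :=
  ∀ x : M, RNonUnit r x →
    (∃ l : List M, IsAtomicFac r x l) ∧
      ∃ F : Set (List M), F.Finite ∧
        ∀ l : List M, IsAtomicFac r x l → ∃ m ∈ F, IsAtomicFac r x m ∧ WordEquiv r l m

/-- `(M, r)` is FmF-atomic. -/
def IsFmFAtomic {M : Type*} [Monoid M] (r : M → M → Prop) : Prop :=
  ∀ x : M, RNonUnit r x →
    (∃ l : List M, IsMinAtomicFac r x l) ∧
      ∃ F : Set (List M), F.Finite ∧
        ∀ l : List M, IsMinAtomicFac r x l → ∃ m ∈ F, IsMinAtomicFac r x m ∧ WordEquiv r l m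


/-! ### Auxiliary material for `stmt9` -/

section Stmt9Aux

variable {M : Type*} [Monoid M] {r : M → M → Prop}

lemma one_r_all (hwp : WeaklyPositive r) (x : M) : r 1 x := by
  have h := hwp.2 1 x 1
  rwa [mul_one, mul_one] at h

lemma runit_mul' (htrans : Transitive r) (hwp : WeaklyPositive r)
    {u v : M} (hu : RUnit r u) (hv : RUnit r v) : RUnit r (u * v) := by
  have h1 : r (u * v * 1) v := hwp.1 v u 1 hu ⟨one_r_all hwp 1, one_r_all hwp 1⟩
  rw [mul_one] at h1
  exact ⟨htrans h1 hv.1, one_r_all hwp _⟩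

lemma rnonunit_sandwich (htrans : Transitive r) (hwp : WeaklyPositive r)
    {u a v : M} (hu : RUnit r u) (hv : RUnit r v) (ha : RNonUnit r a) :
    RNonUnit r (u * a * v) := by
  intro h
  exact ha ⟨htrans (hwp.2 a u v) h.1, one_r_all hwp a⟩

lemma rlt_trans' (htrans : Transitive r) {a b c : M} (h1 : RLt r a b) (h2 : RLt r b c) :
    RLt r a c :=
  ⟨htrans h1.1 h2.1, fun hc => h2.2 (htrans hc h1.1)⟩

lemma dvd2_trans {a b c : M} (h1 : Dvd2 a b) (h2 : Dvd2 b c) : Dvd2 a c := by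
  obtain ⟨u, v, rfl⟩ := h1
  obtain ⟨p, q, rfl⟩ := h2
  exact ⟨p * u, v * q, by simp [mul_assoc]⟩

/-- `w` is a sandwiched non-unit generator with letter in `A`. -/
def IsGen (r : M → M → Prop) (A : Set M) (w : M) : Prop :=
  ∃ u a v : M, RUnit r u ∧ RUnit r v ∧ a ∈ A ∧ RNonUnit r a ∧ w = u * a * v

/-- The set of non-unit letters of `A` strictly below `a`. -/
def FltSet (r : M → M → Prop) (A : Set M) (a : M) : Set M :=
  {β | β ∈ A ∧ RNonUnit r β ∧ RLt r β a}

lemma gen_list_mul_unit (htrans : Transitive r) (hwp : WeaklyPositive r) {A : Set M} :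
    ∀ L : List M, L ≠ [] → (∀ w ∈ L, IsGen r A w) → ∀ s : M, RUnit r s →
      ∃ L' : List M, L' ≠ [] ∧ (∀ w ∈ L', IsGen r A w) ∧ L'.prod = L.prod * s := by
  intro L
  induction L with
  | nil => intro h; exact absurd rfl h
  | cons w rest ih =>
    intro _ hmem s hs
    by_cases hr : rest = []
    · subst hr
      obtain ⟨u, a, v, hu, hv, haA, haNU, rfl⟩ := hmem w List.mem_cons_self
      refine ⟨[u * a * (v * s)], by simp, ?_, by simp [mul_assoc]⟩
      intro w' hw'
      rw [List.mem_singleton] at hw'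
      subst hw'
      exact ⟨u, a, v * s, hu, runit_mul' htrans hwp hv hs, haA, haNU, rfl⟩
    · obtain ⟨L'', j1, j2, j3⟩ := ih hr (fun w' hw' => hmem w' (List.mem_cons_of_mem _ hw')) s hs
      refine ⟨w :: L'', by simp, ?_, by simp [j3, mul_assoc]⟩
      intro w' hw'
      rcases List.mem_cons.1 hw' with rfl | h
      · exact hmem w' List.mem_cons_self
      · exact j2 _ h

lemma exists_gen_list (htrans : Transitive r) (hwp : WeaklyPositive r) {A : Set M}
    (hclos : Submonoid.closure
      {w : M | ∃ u a v : M, RUnit r u ∧ a ∈ A ∧ RUnit r v ∧ w = u * a * v} = ⊤) (x : M) :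
    RUnit r x ∨ ∃ L : List M, L ≠ [] ∧ (∀ w ∈ L, IsGen r A w) ∧ L.prod = x := by
  have hx : x ∈ Submonoid.closure
      {w : M | ∃ u a v : M, RUnit r u ∧ a ∈ A ∧ RUnit r v ∧ w = u * a * v} := by
    rw [hclos]; exact Submonoid.mem_top x
  induction hx using Submonoid.closure_induction with
  | mem w hw =>
    obtain ⟨u, a, v, hu, haA, hv, rfl⟩ := hw
    by_cases ha : RUnit r a
    · exact Or.inl (runit_mul' htrans hwp (runit_mul' htrans hwp hu ha) hv)
    · refine Or.inr ⟨[u * a * v], by simp, ?_, by simp⟩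
      intro w' hw'
      rw [List.mem_singleton] at hw'
      subst hw'
      exact ⟨u, a, v, hu, hv, haA, ha, rfl⟩
  | one => exact Or.inl ⟨one_r_all hwp 1, one_r_all hwp 1⟩
  | mul p q hp hq ihp ihq =>
    rcases ihp with hpu | ⟨L1, h1, h2, h3⟩
    · rcases ihq with hqu | ⟨L2, k1, k2, k3⟩
      · exact Or.inl (runit_mul' htrans hwp hpu hqu)
      · cases L2 with
        | nil => exact absurd rfl k1
        | cons w rest =>
          obtain ⟨u, a, v, hu, hv, haA, haNU, rfl⟩ := k2 w List.mem_cons_self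
          refine Or.inr ⟨(p * u) * a * v :: rest, by simp, ?_, ?_⟩
          · intro w' hw'
            rcases List.mem_cons.1 hw' with rfl | h
            · exact ⟨p * u, a, v, runit_mul' htrans hwp hpu hu, hv, haA, haNU, rfl⟩
            · exact k2 _ (List.mem_cons_of_mem _ h)
          · rw [← k3]; simp [mul_assoc]
    · rcases ihq with hqu | ⟨L2, k1, k2, k3⟩
      · obtain ⟨L', j1, j2, j3⟩ := gen_list_mul_unit htrans hwp L1 h1 h2 q hqu
        exact Or.inr ⟨L', j1, j2, by rw [j3, h3]⟩
      · refine Or.inr ⟨L1 ++ L2, by simp [h1], ?_, by rw [List.prod_append, h3, k3]⟩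
        intro w hw
        rcases List.mem_append.1 hw with h | h
        exacts [h2 _ h, k2 _ h]

lemma facs_concat :
    ∀ L : List M, L ≠ [] →
      (∀ w ∈ L, ∃ F : List M, F ≠ [] ∧ (∀ b ∈ F, RIrred r b) ∧ F.prod = w) →
      ∃ F : List M, F ≠ [] ∧ (∀ b ∈ F, RIrred r b) ∧ F.prod = L.prod := by
  intro L
  induction L with
  | nil => intro h; exact absurd rfl h
  | cons w rest ih =>
    intro _ h
    obtain ⟨Fw, hFw1, hFw2, hFw3⟩ := h w List.mem_cons_self
    by_cases hr : rest = []
    · subst hr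
      exact ⟨Fw, hFw1, hFw2, by simpa using hFw3⟩
    · obtain ⟨Fr, j1, j2, j3⟩ := ih hr fun w' hw' => h w' (List.mem_cons_of_mem _ hw')
      refine ⟨Fw ++ Fr, by simp [hFw1], ?_,
        by rw [List.prod_append, hFw3, j3, List.prod_cons]⟩
      intro b hb
      rcases List.mem_append.1 hb with hb | hb
      exacts [hFw2 _ hb, j2 _ hb]

/-- Every f.g.u. weakly positive premonoid is factorable. -/
theorem factorable_of_fgu (r : M → M → Prop)
    (hrefl : Reflexive r) (htrans : Transitive r)
    (hwp : WeaklyPositive r) (hfgu : IsFGU r) : Factorable r := by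
  classical
  obtain ⟨A, hAfin, hclos⟩ := hfgu
  have hfltfin : ∀ a : M, (FltSet r A a).Finite := fun a =>
    hAfin.subset fun β hβ => hβ.1
  have step : ∀ a u v : M, RUnit r u → RUnit r v → ∀ y : M, RNonUnit r y →
      RLt r y (u * a * v) →
      ∃ L : List M, L ≠ [] ∧ (∀ w' ∈ L,
        ∃ u' β v' : M, RUnit r u' ∧ RUnit r v' ∧ β ∈ A ∧ RNonUnit r β ∧
          RLt r β a ∧ w' = u' * β * v') ∧ L.prod = y := by
    intro a u v hu hv y hyNU hylt
    rcases exists_gen_list htrans hwp hclos y with hyu | ⟨L, hLne, hLmem, hLprod⟩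
    · exact absurd hyu hyNU
    refine ⟨L, hLne, ?_, hLprod⟩
    intro w' hw'
    obtain ⟨u', β, v', hu', hv', hβA, hβNU, rfl⟩ := hLmem w' hw'
    obtain ⟨s, t, rfl⟩ := List.append_of_mem hw'
    have hps : (s ++ (u' * β * v') :: t).prod = s.prod * (u' * β * v') * t.prod := by
      simp [List.prod_append, mul_assoc]
    have hw'y : r (u' * β * v') y := by
      rw [← hLprod, hps]
      exact hwp.2 _ s.prod t.prod
    have hβy : r β y := htrans (hwp.2 β u' v') hw'y
    have hwa : r (u * a * v) a := hwp.1 a u v hu hv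
    exact ⟨u', β, v', hu', hv', hβA, hβNU,
      ⟨htrans hβy (htrans hylt.1 hwa), fun hab => hylt.2 (htrans hwa (htrans hab hβy))⟩, rfl⟩
  have key : ∀ n : ℕ, ∀ a : M, a ∈ A → RNonUnit r a → (FltSet r A a).ncard ≤ n →
      ∀ u v : M, RUnit r u → RUnit r v →
      ∃ F : List M, F ≠ [] ∧ (∀ b ∈ F, RIrred r b) ∧ F.prod = u * a * v := by
    intro n
    induction n using Nat.strong_induction_on with
    | _ n ih =>
      intro a haA haNU hcard u v hu hv
      have hwNU : RNonUnit r (u * a * v) := rnonunit_sandwich htrans hwp hu hv haNU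
      by_cases hirr : RIrred r (u * a * v)
      · exact ⟨[u * a * v], by simp, by simpa using hirr, by simp⟩
      · unfold RIrred at hirr
        push_neg at hirr
        obtain ⟨y, z, hy, hz, hylt, hzlt, heq⟩ := hirr hwNU
        have hfac : ∀ y' : M, RNonUnit r y' → RLt r y' (u * a * v) →
            ∃ F : List M, F ≠ [] ∧ (∀ b ∈ F, RIrred r b) ∧ F.prod = y' := by
          intro y' hy'NU hy'lt
          obtain ⟨L, hLne, hLmem, hLprod⟩ := step a u v hu hv y' hy'NU hy'lt
          have hfw : ∀ w' ∈ L, ∃ F : List M, F ≠ [] ∧ (∀ b ∈ F, RIrred r b) ∧ F.prod = w' := by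
            intro w' hw'
            obtain ⟨u', β, v', hu', hv', hβA, hβNU, hβlt, rfl⟩ := hLmem w' hw'
            have hsub : FltSet r A β ⊆ FltSet r A a := fun γ hγ =>
              ⟨hγ.1, hγ.2.1, rlt_trans' htrans hγ.2.2 hβlt⟩
            have hmemd : β ∈ FltSet r A a := ⟨hβA, hβNU, hβlt⟩
            have hnotm : β ∉ FltSet r A β := fun hβm => hβm.2.2.2 hβm.2.2.1
            have hne : FltSet r A β ≠ FltSet r A a := fun hEq => hnotm (hEq ▸ hmemd)
            have hlt : (FltSet r A β).ncard < (FltSet r A a).ncard :=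
              Set.ncard_lt_ncard (ssubset_of_subset_of_ne hsub hne) (hfltfin a)
            exact ih _ (lt_of_lt_of_le hlt hcard) β hβA hβNU le_rfl u' v' hu' hv'
          obtain ⟨F, f1, f2, f3⟩ := facs_concat L hLne hfw
          exact ⟨F, f1, f2, f3.trans hLprod⟩
        obtain ⟨Fy, fy1, fy2, fy3⟩ := hfac y hy hylt
        obtain ⟨Fz, fz1, fz2, fz3⟩ := hfac z hz hzlt
        refine ⟨Fy ++ Fz, by simp [fy1], ?_, by rw [List.prod_append, fy3, fz3, heq]⟩
        intro b hb
        rcases List.mem_append.1 hb with hb | hb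
        exacts [fy2 _ hb, fz2 _ hb]
  intro x hxNU
  rcases exists_gen_list htrans hwp hclos x with hxu | ⟨L, hLne, hLmem, hLprod⟩
  · exact absurd hxu hxNU
  have hfw : ∀ w ∈ L, ∃ F : List M, F ≠ [] ∧ (∀ b ∈ F, RIrred r b) ∧ F.prod = w := by
    intro w hw
    obtain ⟨u, a, v, hu, hv, haA, haNU, rfl⟩ := hLmem w hw
    exact key (FltSet r A a).ncard a haA haNU le_rfl u v hu hv
  obtain ⟨F, f1, f2, f3⟩ := facs_concat L hLne hfw
  exact ⟨F, f1, f2, f3.trans hLprod⟩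

end Stmt9Aux

/-- Corollary 4.8. Every weakly l.f.g.u. weakly positive monoid is
factorable: if `(H, ≼)` is weakly positive and the germ of `(H, ≼)` at every
`≼`-non-unit is f.g.u., then every `≼`-non-unit of `H` is a non-empty product of
`≼`-irreducibles. -/
theorem stmt9 {H : Type*} [Monoid H] (r : H → H → Prop)
    (hrefl : Reflexive r) (htrans : Transitive r)
    (hwp : WeaklyPositive r)
    (hwlfgu : ∀ x : H, RNonUnit r x → IsFGU (SubRel r (GermSub x))) :
    Factorable r := by
  intro x hx
  have hxK : x ∈ GermSub x := Submonoid.subset_closure ⟨1, 1, by simp⟩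
  have hrefl' : Reflexive (SubRel r (GermSub x)) := fun a => hrefl (a : H)
  have htrans' : Transitive (SubRel r (GermSub x)) := fun a b c h1 h2 => htrans h1 h2
  have hwp' : WeaklyPositive (SubRel r (GermSub x)) := by
    constructor
    · intro a u v hu hv
      exact hwp.1 (a : H) (u : H) (v : H) hu hv
    · intro a b c
      exact hwp.2 (a : H) (b : H) (c : H)
  obtain ⟨L, hLne, hLirr, hLprod⟩ :=
    factorable_of_fgu (SubRel r (GermSub x)) hrefl' htrans' hwp' (hwlfgu x hx) ⟨x, hxK⟩ hx
  refine ⟨L.map Subtype.val,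
    fun h => hLne (List.eq_nil_of_length_eq_zero (by simpa using congrArg List.length h)),
    ?_, ?_⟩
  · intro b hb
    rw [List.mem_map] at hb
    obtain ⟨a, haL, rfl⟩ := hb
    have hdvd : Dvd2 (a : H) x := by
      obtain ⟨s, t, hst⟩ := List.append_of_mem haL
      refine ⟨(s.prod : H), (t.prod : H), ?_⟩
      have hx' : (⟨x, hxK⟩ : GermSub x) = s.prod * a * t.prod := by
        rw [← hLprod, hst]; simp [List.prod_append, mul_assoc]
      have hcoe := congrArg (Subtype.val) hx'
      simpa [mul_assoc] using hcoe
    obtain ⟨haNU, hireduc⟩ := hLirr a haL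
    refine ⟨haNU, ?_⟩
    intro y z hyNU hzNU hylt hzlt heq
    have hyx : Dvd2 y x := dvd2_trans ⟨1, z, by rw [heq, one_mul]⟩ hdvd
    have hzx : Dvd2 z x := dvd2_trans ⟨y, 1, by rw [heq, mul_one]⟩ hdvd
    exact hireduc ⟨y, Submonoid.subset_closure hyx⟩ ⟨z, Submonoid.subset_closure hzx⟩
      hyNU hzNU hylt hzlt (Subtype.ext heq)
  · have hcoe := congrArg (Subtype.val) hLprod
    rw [SubmonoidClass.coe_list_prod] at hcoe
    simpa using hcoe

end FactPaper
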